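/- For any t-spread strongly stable collection (L_d)_{d≥1} with L_d ⊆ M_{n,d,t} and shad_t(L_d) ⊆ L_{d+1}, there exists a (unique) collection (L'_d)_{d≥1} with each L'_d ⊆ M_{n,d,t} a t-spread lex set, |L'_d| = |L_d|, and shad_t(L'_d) ⊆ L'_{d+1} for all d. (Existence of I^{t-lex} with the same f_t-vector.) -/

import Mathlib

open Finset

/-- The set of `t`-spread "monomials" of degree `d` in variables `x_1,...,x_n`,
identified with `d`-element subsets of `{1,...,n}` with consecutive gaps `≥ t`. -/
def M (n d t : ℕ) : Finset (Finset ℕ) :=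
  (Finset.powersetCard d (Finset.Icc 1 n)).filter
    (fun F => ∀ i ∈ F, ∀ j ∈ F, i < j → i + t ≤ j)

/-- The `τ`-shadow of a family `L ⊆ M n d t`. -/
def shad (τ n d : ℕ) (L : Finset (Finset ℕ)) : Finset (Finset ℕ) :=
  (M n (d + 1) τ).filter (fun G => ∃ F ∈ L, F ⊆ G)

/-- `F >_lex G` : the smallest element of the symmetric difference belongs to `F`. -/
def lexGT (F G : Finset ℕ) : Prop :=
  ∃ k, k ∈ F ∧ k ∉ G ∧ ∀ j < k, (j ∈ F ↔ j ∈ G)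

/-- `L` is a `t`-spread lex set in `M n d t` (a lex up-set). -/
def IsLexSet (n d t : ℕ) (L : Finset (Finset ℕ)) : Prop :=
  L ⊆ M n d t ∧ ∀ u ∈ L, ∀ v ∈ M n d t, lexGT v u → v ∈ L

/-- `L` is a `t`-spread strongly stable set in `M n d t`. -/
def IsSSS (n d t : ℕ) (L : Finset (Finset ℕ)) : Prop :=
  L ⊆ M n d t ∧ ∀ F ∈ L, ∀ j ∈ F, ∀ i < j, i ∉ F →
    insert i (F.erase j) ∈ M n d t → insert i (F.erase j) ∈ L

/-- number of members of `L` with maximum element `= i`. -/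
def mEq (i : ℕ) (L : Finset (Finset ℕ)) : ℕ :=
  (L.filter (fun F => i ∈ F ∧ ∀ j ∈ F, j ≤ i)).card

/-- number of members of `L` with maximum element `≤ i`. -/
def mLe (i : ℕ) (L : Finset (Finset ℕ)) : ℕ :=
  (L.filter (fun F => ∀ j ∈ F, j ≤ i)).card

attribute [local instance] Classical.propDecidable

lemma mem_M {n d t : ℕ} {F : Finset ℕ} :
    F ∈ M n d t ↔ (F ⊆ Finset.Icc 1 n ∧ F.card = d ∧
      ∀ i ∈ F, ∀ j ∈ F, i < j → i + t ≤ j) := by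
  simp [M, Finset.mem_powersetCard, and_assoc]

lemma M_mono {n n' d t : ℕ} (h : n ≤ n') : M n d t ⊆ M n' d t := by
  intro F hF
  rw [mem_M] at hF ⊢
  exact ⟨hF.1.trans (Finset.Icc_subset_Icc_right h), hF.2⟩

lemma one_le_of_mem_M {n d t : ℕ} {F : Finset ℕ} (hF : F ∈ M n d t) {j : ℕ} (hj : j ∈ F) :
    1 ≤ j := (Finset.mem_Icc.1 ((mem_M.1 hF).1 hj)).1

lemma le_n_of_mem_M {n d t : ℕ} {F : Finset ℕ} (hF : F ∈ M n d t) {j : ℕ} (hj : j ∈ F) :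
    j ≤ n := (Finset.mem_Icc.1 ((mem_M.1 hF).1 hj)).2

lemma nonempty_of_mem_M {n d t : ℕ} {F : Finset ℕ} (hF : F ∈ M n d t) (hd : 1 ≤ d) :
    F.Nonempty := by
  rw [← Finset.card_pos, (mem_M.1 hF).2.1]; exact hd

lemma M_of_le {n n' d t : ℕ} {F : Finset ℕ} (hF : F ∈ M n d t)
    (h : ∀ j ∈ F, j ≤ n') : F ∈ M n' d t := by
  have h1 : ∀ j ∈ F, 1 ≤ j := fun j hj => one_le_of_mem_M hF hj
  rw [mem_M] at hF ⊢
  exact ⟨fun j hj => Finset.mem_Icc.2 ⟨h1 j hj, h j hj⟩, hF.2⟩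

/-! ### lexGT basic order properties -/

lemma lexGT_irrefl (F : Finset ℕ) : ¬ lexGT F F := by
  rintro ⟨k, hk, hk', -⟩; exact hk' hk

lemma lexGT_trans {F G H : Finset ℕ} (h1 : lexGT F G) (h2 : lexGT G H) : lexGT F H := by
  obtain ⟨k1, hk1F, hk1G, hb1⟩ := h1
  obtain ⟨k2, hk2G, hk2H, hb2⟩ := h2
  rcases lt_trichotomy k1 k2 with h | h | h
  · exact ⟨k1, hk1F, fun hk1H => hk1G ((hb2 k1 h).2 hk1H),
      fun j hj => (hb1 j hj).trans (hb2 j (hj.trans h))⟩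
  · subst h; exact ⟨k1, hk1F, hk2H, fun j hj => (hb1 j hj).trans (hb2 j hj)⟩
  · exact ⟨k2, (hb1 k2 h).2 hk2G, hk2H, fun j hj => (hb1 j (hj.trans h)).trans (hb2 j hj)⟩

lemma lexGT_total {F G : Finset ℕ} (h : F ≠ G) : lexGT F G ∨ lexGT G F := by
  have hne : ((F \ G) ∪ (G \ F)).Nonempty := by
    rw [Finset.nonempty_iff_ne_empty]
    intro he
    apply h
    apply Finset.Subset.antisymm <;> intro x hx <;> by_contra hx'
    · have hm : x ∈ (F \ G) ∪ (G \ F) :=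
        Finset.mem_union_left _ (Finset.mem_sdiff.2 ⟨hx, hx'⟩)
      rw [he] at hm; exact absurd hm (Finset.notMem_empty x)
    · have hm : x ∈ (F \ G) ∪ (G \ F) :=
        Finset.mem_union_right _ (Finset.mem_sdiff.2 ⟨hx, hx'⟩)
      rw [he] at hm; exact absurd hm (Finset.notMem_empty x)
  set k := ((F \ G) ∪ (G \ F)).min' hne with hkdef
  have hkmem := ((F \ G) ∪ (G \ F)).min'_mem hne
  have hbelow : ∀ j < k, (j ∈ F ↔ j ∈ G) := by
    intro j hj
    by_contra hiff
    have hj' : j ∈ (F \ G) ∪ (G \ F) := by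
      rw [Finset.mem_union, Finset.mem_sdiff, Finset.mem_sdiff]
      tauto
    exact absurd (Finset.min'_le _ _ hj') (by omega)
  rcases Finset.mem_union.1 hkmem with hk | hk
  · exact Or.inl ⟨k, (Finset.mem_sdiff.1 hk).1, (Finset.mem_sdiff.1 hk).2, hbelow⟩
  · exact Or.inr ⟨k, (Finset.mem_sdiff.1 hk).1, (Finset.mem_sdiff.1 hk).2,
      fun j hj => (hbelow j hj).symm⟩

/-! ### rank and lex segments -/

noncomputable def rnk (n d t : ℕ) (F : Finset ℕ) : ℕ :=
  ((M n d t).filter (fun G => lexGT G F)).card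

noncomputable def lexSet (n d t m : ℕ) : Finset (Finset ℕ) :=
  (M n d t).filter (fun F => rnk n d t F < m)

lemma lexSet_subset_M {n d t m : ℕ} : lexSet n d t m ⊆ M n d t :=
  Finset.filter_subset _ _

lemma mem_lexSet {n d t m : ℕ} {F : Finset ℕ} :
    F ∈ lexSet n d t m ↔ F ∈ M n d t ∧ rnk n d t F < m := Finset.mem_filter

lemma rnk_lt_rnk {n d t : ℕ} {F G : Finset ℕ} (hF : F ∈ M n d t)
    (h : lexGT F G) : rnk n d t F < rnk n d t G := by
  have hsub : insert F ((M n d t).filter (fun H => lexGT H F)) ⊆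
      (M n d t).filter (fun H => lexGT H G) := by
    intro H hH
    rcases Finset.mem_insert.1 hH with rfl | hH
    · exact Finset.mem_filter.2 ⟨hF, h⟩
    · have := Finset.mem_filter.1 hH
      exact Finset.mem_filter.2 ⟨this.1, lexGT_trans this.2 h⟩
  have hFnot : F ∉ (M n d t).filter (fun H => lexGT H F) := by
    simp [lexGT_irrefl F]
  calc rnk n d t F < (insert F ((M n d t).filter (fun H => lexGT H F))).card := by
        have hr : rnk n d t F = ((M n d t).filter (fun H => lexGT H F)).card := rfl
        rw [Finset.card_insert_of_notMem hFnot]; omega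
    _ ≤ _ := Finset.card_le_card hsub

lemma card_lexSet (n d t : ℕ) : ∀ m, (lexSet n d t m).card = min m (M n d t).card := by
  intro m
  induction m with
  | zero => simp [lexSet]
  | succ m ih =>
    by_cases h : (M n d t).card ≤ m
    · have hall : ∀ F ∈ M n d t, rnk n d t F < (M n d t).card := by
        intro F hF
        have hsub : (M n d t).filter (fun G => lexGT G F) ⊆ (M n d t).erase F := by
          intro G hG
          have := Finset.mem_filter.1 hG
          refine Finset.mem_erase.2 ⟨?_, this.1⟩
          rintro rfl; exact lexGT_irrefl _ this.2
        have := (Finset.card_le_card hsub).trans_lt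
          (Finset.card_erase_lt_of_mem hF)
        exact this
      have h1 : lexSet n d t m = M n d t := by
        apply Finset.Subset.antisymm (Finset.filter_subset _ _)
        intro F hF
        exact Finset.mem_filter.2 ⟨hF, (hall F hF).trans_le h⟩
      have h2 : lexSet n d t (m+1) = M n d t := by
        apply Finset.Subset.antisymm (Finset.filter_subset _ _)
        intro F hF
        exact Finset.mem_filter.2 ⟨hF, (hall F hF).trans_le (by omega)⟩
      rw [h2]; omega
    · push_neg at h
      have hcard : (lexSet n d t m).card = m := by rw [ih]; omega
      -- there is an element of M outside lexSet m; pick one of minimal rank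
      have hex : (M n d t \ lexSet n d t m).Nonempty := by
        rw [← Finset.card_pos, Finset.card_sdiff_of_subset lexSet_subset_M, hcard]
        omega
      obtain ⟨F, hFmem, hFmin⟩ := Finset.exists_min_image _ (rnk n d t) hex
      have hFM : F ∈ M n d t := (Finset.mem_sdiff.1 hFmem).1
      have hFnot : F ∉ lexSet n d t m := (Finset.mem_sdiff.1 hFmem).2
      have hFge : m ≤ rnk n d t F := by
        by_contra hc
        exact hFnot (Finset.mem_filter.2 ⟨hFM, by omega⟩)
      have hFle : rnk n d t F ≤ m := by
        have hsub : (M n d t).filter (fun G => lexGT G F) ⊆ lexSet n d t m := by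
          intro G hG
          obtain ⟨hGM, hGF⟩ := Finset.mem_filter.1 hG
          by_contra hGnot
          have := hFmin G (Finset.mem_sdiff.2 ⟨hGM, hGnot⟩)
          exact absurd (rnk_lt_rnk hGM hGF) (by omega)
        calc rnk n d t F ≤ (lexSet n d t m).card := Finset.card_le_card hsub
          _ = m := hcard
      have hFrnk : rnk n d t F = m := le_antisymm hFle hFge
      have hset : lexSet n d t (m+1) = insert F (lexSet n d t m) := by
        apply Finset.Subset.antisymm
        · intro G hG
          obtain ⟨hGM, hGr⟩ := Finset.mem_filter.1 hG
          rcases Nat.lt_succ_iff_lt_or_eq.1 hGr with h' | h'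
          · exact Finset.mem_insert_of_mem (Finset.mem_filter.2 ⟨hGM, h'⟩)
          · -- rnk G = m = rnk F forces G = F
            rcases eq_or_ne G F with rfl | hne
            · exact Finset.mem_insert_self _ _
            · rcases lexGT_total hne with hgt | hgt
              · exact absurd (rnk_lt_rnk hGM hgt) (by omega)
              · exact absurd (rnk_lt_rnk hFM hgt) (by omega)
        · intro G hG
          rcases Finset.mem_insert.1 hG with rfl | hG
          · exact Finset.mem_filter.2 ⟨hFM, by omega⟩
          · obtain ⟨hGM, hGr⟩ := Finset.mem_filter.1 hG
            exact Finset.mem_filter.2 ⟨hGM, by omega⟩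
      rw [hset, Finset.card_insert_of_notMem hFnot, hcard]
      omega


/-! ### up-set nesting and lexSet properties -/

lemma upset_subset_upset {n d t : ℕ} {A B : Finset (Finset ℕ)}
    (hA : IsLexSet n d t A) (hB : IsLexSet n d t B) (h : A.card ≤ B.card) : A ⊆ B := by
  by_contra hc
  obtain ⟨F, hFA, hFB⟩ := Finset.not_subset.1 hc
  have hBA : B ⊆ A := by
    intro G hGB
    rcases eq_or_ne G F with rfl | hne
    · exact absurd hGB hFB
    · rcases lexGT_total hne with hgt | hgt
      · exact hA.2 F hFA G (hB.1 hGB) hgt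
      · exact absurd (hB.2 G hGB F (hA.1 hFA) hgt) hFB
  have : B.card < A.card := Finset.card_lt_card (Finset.ssubset_iff_of_subset hBA |>.2 ⟨F, hFA, hFB⟩)
  omega

lemma lexSet_isLexSet (n d t m : ℕ) : IsLexSet n d t (lexSet n d t m) := by
  refine ⟨lexSet_subset_M, fun u hu v hv hgt => ?_⟩
  obtain ⟨huM, hur⟩ := mem_lexSet.1 hu
  exact mem_lexSet.2 ⟨hv, (rnk_lt_rnk hv hgt).trans_le (by omega)⟩

lemma lexSet_eq_of_isLexSet {n d t : ℕ} {A : Finset (Finset ℕ)}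
    (hA : IsLexSet n d t A) : A = lexSet n d t A.card := by
  have hle : A.card ≤ (M n d t).card := Finset.card_le_card hA.1
  have hcard : (lexSet n d t A.card).card = A.card := by
    rw [card_lexSet]; omega
  apply Finset.Subset.antisymm
  · exact upset_subset_upset hA (lexSet_isLexSet n d t A.card) (by omega)
  · exact upset_subset_upset (lexSet_isLexSet n d t A.card) hA (by omega)

/-! ### lex implies strongly stable -/

lemma isSSS_of_isLexSet {n d t : ℕ} {L : Finset (Finset ℕ)}
    (hL : IsLexSet n d t L) : IsSSS n d t L := by
  refine ⟨hL.1, fun F hF j hj i hij hiF hM => ?_⟩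
  apply hL.2 F hF _ hM
  exact ⟨i, Finset.mem_insert_self _ _, hiF, fun l hl => by
    simp only [Finset.mem_insert, Finset.mem_erase]
    constructor
    · rintro (rfl | ⟨-, hlF⟩)
      · omega
      · exact hlF
    · intro hlF
      exact Or.inr ⟨by omega, hlF⟩⟩

/-! ### max of a finset -/

def mx (F : Finset ℕ) : ℕ := F.sup id

lemma le_mx {F : Finset ℕ} {x : ℕ} (h : x ∈ F) : x ≤ mx F := Finset.le_sup (f := id) h

lemma mx_mem {F : Finset ℕ} (h : F.Nonempty) : mx F ∈ F := by
  obtain ⟨b, hb, hball⟩ := Finset.exists_max_image F id h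
  have h1 : mx F ≤ b := Finset.sup_le hball
  have h2 : b ≤ mx F := le_mx hb
  have : mx F = b := le_antisymm h1 h2
  rw [this]; exact hb

lemma mx_eq_of {F : Finset ℕ} {k : ℕ} (hk : k ∈ F) (h : ∀ j ∈ F, j ≤ k) : mx F = k :=
  le_antisymm (Finset.sup_le h) (le_mx hk)

lemma mx_insert {G : Finset ℕ} {j : ℕ} (h : ∀ x ∈ G, x ≤ j) : mx (insert j G) = j :=
  mx_eq_of (Finset.mem_insert_self _ _)
    (fun l hl => by rcases Finset.mem_insert.1 hl with rfl | hl; omega; exact h l hl)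

/-! ### erase and insert in M -/

lemma erase_mem_M {n d t : ℕ} {G : Finset ℕ} (hG : G ∈ M n (d+1) t) {x : ℕ} (hx : x ∈ G) :
    G.erase x ∈ M n d t := by
  obtain ⟨hsub, hcard, hsp⟩ := mem_M.1 hG
  refine mem_M.2 ⟨fun y hy => hsub (Finset.mem_of_mem_erase hy), ?_, ?_⟩
  · rw [Finset.card_erase_of_mem hx, hcard]; omega
  · intro i hi j hj hij
    exact hsp i (Finset.mem_of_mem_erase hi) j (Finset.mem_of_mem_erase hj) hij

lemma insert_top_mem_M {n d t : ℕ} (ht : 1 ≤ t) {G : Finset ℕ} (hG : G ∈ M n d t)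
    {k : ℕ} (hk1 : 1 ≤ k) (hkn : k ≤ n) (htop : ∀ j ∈ G, j + t ≤ k) :
    insert k G ∈ M n (d+1) t := by
  obtain ⟨hsub, hcard, hsp⟩ := mem_M.1 hG
  have hknotmem : k ∉ G := fun h => by have := htop k h; omega
  refine mem_M.2 ⟨?_, ?_, ?_⟩
  · intro y hy
    rcases Finset.mem_insert.1 hy with rfl | hy
    · exact Finset.mem_Icc.2 ⟨hk1, hkn⟩
    · exact hsub hy
  · rw [Finset.card_insert_of_notMem hknotmem, hcard]
  · intro i hi j hj hij
    rcases Finset.mem_insert.1 hi with hik | hi <;> rcases Finset.mem_insert.1 hj with hjk | hj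
    · omega
    · have := htop j hj; omega
    · have := htop i hi; omega
    · exact hsp i hi j hj hij

lemma sdiff_singleton_of_subset {F G : Finset ℕ} (hFG : F ⊆ G) {d : ℕ}
    (hF : F.card = d) (hG : G.card = d + 1) : ∃ x ∈ G, x ∉ F ∧ F = G.erase x := by
  have hcard : (G \ F).card = 1 := by
    rw [Finset.card_sdiff_of_subset hFG, hF, hG]; omega
  obtain ⟨x, hx⟩ := Finset.card_eq_one.1 hcard
  have hxG : x ∈ G := by
    have : x ∈ G \ F := hx ▸ Finset.mem_singleton_self x
    exact (Finset.mem_sdiff.1 this).1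
  have hxF : x ∉ F := by
    have : x ∈ G \ F := hx ▸ Finset.mem_singleton_self x
    exact (Finset.mem_sdiff.1 this).2
  refine ⟨x, hxG, hxF, ?_⟩
  ext y
  simp only [Finset.mem_erase]
  constructor
  · intro hy
    exact ⟨fun h => hxF (h ▸ hy), hFG hy⟩
  · rintro ⟨hyx, hyG⟩
    by_contra hyF
    have : y ∈ G \ F := Finset.mem_sdiff.2 ⟨hyG, hyF⟩
    rw [hx] at this
    exact hyx (Finset.mem_singleton.1 this)

/-! ### characterization of the shadow of an SSS family -/

lemma mem_shad {τ n d : ℕ} {L : Finset (Finset ℕ)} {G : Finset ℕ} :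
    G ∈ shad τ n d L ↔ G ∈ M n (d+1) τ ∧ ∃ F ∈ L, F ⊆ G := Finset.mem_filter

lemma erase_mx_mem_of_shad {n d t : ℕ} {L : Finset (Finset ℕ)} (hL : IsSSS n d t L)
    {G : Finset ℕ} (hG : G ∈ shad t n d L) : G.erase (mx G) ∈ L := by
  obtain ⟨hGM, F, hFL, hFG⟩ := mem_shad.1 hG
  have hFM := hL.1 hFL
  obtain ⟨x, hxG, hxF, hFx⟩ := sdiff_singleton_of_subset hFG (mem_M.1 hFM).2.1 (mem_M.1 hGM).2.1
  have hGne : G.Nonempty := nonempty_of_mem_M hGM (by omega)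
  have hkG : mx G ∈ G := mx_mem hGne
  rcases eq_or_ne x (mx G) with rfl | hne
  · rwa [← hFx]
  · have hkF : mx G ∈ F := by
      rw [hFx]; exact Finset.mem_erase.2 ⟨fun h => hne h.symm, hkG⟩
    have hxk : x < mx G := lt_of_le_of_ne (le_mx hxG) hne
    have heq : insert x (F.erase (mx G)) = G.erase (mx G) := by
      ext y
      simp only [Finset.mem_insert, Finset.mem_erase, hFx]
      constructor
      · rintro (rfl | ⟨hyk, -, hyG⟩)
        · exact ⟨by omega, hxG⟩
        · exact ⟨hyk, hyG⟩
      · rintro ⟨hyk, hyG⟩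
        rcases eq_or_ne y x with rfl | hyx
        · exact Or.inl rfl
        · exact Or.inr ⟨hyk, hyx, hyG⟩
    have hMmem : insert x (F.erase (mx G)) ∈ M n d t := by
      rw [heq]; exact erase_mem_M hGM hkG
    have := hL.2 F hFL (mx G) hkF x hxk hxF hMmem
    rwa [heq] at this

/-! ### counting the shadow -/

lemma mEq_shad {n d t : ℕ} (ht : 1 ≤ t) (hd : 1 ≤ d) {L : Finset (Finset ℕ)}
    (hL : IsSSS n d t L) {k : ℕ} (hk1 : 1 ≤ k) (hkn : k ≤ n) :
    mEq k (shad t n d L) = mLe (k - t) L := by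
  apply Finset.card_nbij' (i := fun G => G.erase k) (j := fun F => insert k F)
  · intro G hG
    obtain ⟨hGs, hkG, hGle⟩ := Finset.mem_filter.1 hG
    have hmx : mx G = k := mx_eq_of hkG hGle
    have h1 : G.erase k ∈ L := by
      have := erase_mx_mem_of_shad hL hGs; rwa [hmx] at this
    refine Finset.mem_filter.2 ⟨h1, fun j hj => ?_⟩
    obtain ⟨hjk, hjG⟩ := Finset.mem_erase.1 hj
    have hsp := (mem_M.1 (mem_shad.1 hGs).1).2.2 j hjG k hkG
    have : j < k := lt_of_le_of_ne (hGle j hjG) hjk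
    have := hsp this
    omega
  · intro F hF
    obtain ⟨hFL, hFle⟩ := Finset.mem_filter.1 hF
    have hFM := hL.1 hFL
    obtain ⟨j0, hj0⟩ := nonempty_of_mem_M hFM hd
    have htk : t < k := by
      have h1 := one_le_of_mem_M hFM hj0
      have h2 := hFle j0 hj0
      omega
    have hins : insert k F ∈ M n (d+1) t :=
      insert_top_mem_M ht hFM hk1 hkn (fun j hj => by have := hFle j hj; omega)
    refine Finset.mem_filter.2 ⟨mem_shad.2 ⟨hins, F, hFL, Finset.subset_insert _ _⟩,
      Finset.mem_insert_self _ _, fun j hj => ?_⟩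
    rcases Finset.mem_insert.1 hj with rfl | hj
    · omega
    · have := hFle j hj; omega
  · intro G hG
    obtain ⟨-, hkG, -⟩ := Finset.mem_filter.1 hG
    exact Finset.insert_erase hkG
  · intro F hF
    obtain ⟨hFL, hFle⟩ := Finset.mem_filter.1 hF
    apply Finset.erase_insert
    intro hkF
    have hFM := hL.1 hFL
    have := hFle k hkF
    omega

lemma card_eq_sum_mEq {n e t : ℕ} (he : 1 ≤ e) {A : Finset (Finset ℕ)}
    (hA : A ⊆ M n e t) : A.card = ∑ k ∈ Finset.Icc 1 n, mEq k A := by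
  have H : ∀ F ∈ A, mx F ∈ Finset.Icc 1 n := by
    intro F hF
    have hFM := hA hF
    have hne := nonempty_of_mem_M hFM he
    exact Finset.mem_Icc.2 ⟨one_le_of_mem_M hFM (mx_mem hne), le_n_of_mem_M hFM (mx_mem hne)⟩
  rw [Finset.card_eq_sum_card_fiberwise H]
  apply Finset.sum_congr rfl
  intro k hk
  unfold mEq
  congr 1
  apply Finset.filter_congr
  intro F hF
  have hne := nonempty_of_mem_M (hA hF) he
  constructor
  · rintro rfl
    exact ⟨mx_mem hne, fun j hj => le_mx hj⟩
  · rintro ⟨hkF, hle⟩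
    exact mx_eq_of hkF hle

lemma card_shad {n d t : ℕ} (ht : 1 ≤ t) (hd : 1 ≤ d) {L : Finset (Finset ℕ)}
    (hL : IsSSS n d t L) :
    (shad t n d L).card = ∑ k ∈ Finset.Icc 1 n, mLe (k - t) L := by
  have hsub : shad t n d L ⊆ M n (d+1) t := Finset.filter_subset _ _
  rw [card_eq_sum_mEq (by omega) hsub]
  apply Finset.sum_congr rfl
  intro k hk
  obtain ⟨h1, h2⟩ := Finset.mem_Icc.1 hk
  exact mEq_shad ht hd hL h1 h2

/-! ### the shadow of a lex set is a lex set -/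

lemma exists_gt_of_lexGT {H G : Finset ℕ} (hcard : G.card = H.card)
    {k : ℕ} (hkH : k ∈ H) (hkG : k ∉ G) (hb : ∀ j < k, (j ∈ H ↔ j ∈ G)) :
    ∃ y ∈ G, k < y := by
  by_contra hc
  push_neg at hc
  have hsub : insert k G ⊆ H := by
    intro y hy
    rcases Finset.mem_insert.1 hy with rfl | hy
    · exact hkH
    · have hyk : y < k := lt_of_le_of_ne (hc y hy) (fun h => hkG (h ▸ hy))
      exact (hb y hyk).2 hy
  have := Finset.card_le_card hsub
  rw [Finset.card_insert_of_notMem hkG] at this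
  omega

lemma shad_isLexSet {n d t : ℕ} (hd : 1 ≤ d) {L : Finset (Finset ℕ)}
    (hL : IsLexSet n d t L) : IsLexSet n (d+1) t (shad t n d L) := by
  have hSSS := isSSS_of_isLexSet hL
  refine ⟨Finset.filter_subset _ _, ?_⟩
  intro G hG H hH ⟨k, hkH, hkG, hb⟩
  have hGM : G ∈ M n (d+1) t := (mem_shad.1 hG).1
  have hGL : G.erase (mx G) ∈ L := erase_mx_mem_of_shad hSSS hG
  have hGcard : G.card = d + 1 := (mem_M.1 hGM).2.1
  have hHcard : H.card = d + 1 := (mem_M.1 hH).2.1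
  have hGne : G.Nonempty := nonempty_of_mem_M hGM (by omega)
  have hHne : H.Nonempty := nonempty_of_mem_M hH (by omega)
  obtain ⟨y, hyG, hky⟩ := exists_gt_of_lexGT (hGcard.trans hHcard.symm) hkH hkG hb
  have hkmxG : k < mx G := hky.trans_le (le_mx hyG)
  have hkmxH : k ≤ mx H := le_mx hkH
  have hHeL : H.erase (mx H) ∈ L := by
    rcases eq_or_ne k (mx H) with heqk | hne
    · -- H.erase k = G.erase (mx G)
      have hfilt : H.filter (fun y => y < k) = G.filter (fun y => y < k) := by
        ext z
        simp only [Finset.mem_filter]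
        constructor
        · rintro ⟨hz, hzk⟩; exact ⟨(hb z hzk).1 hz, hzk⟩
        · rintro ⟨hz, hzk⟩; exact ⟨(hb z hzk).2 hz, hzk⟩
      have hHerase : H.erase k = H.filter (fun y => y < k) := by
        ext z
        simp only [Finset.mem_erase, Finset.mem_filter]
        constructor
        · rintro ⟨hzk, hz⟩
          have := (le_mx hz).trans_eq heqk.symm
          exact ⟨hz, by omega⟩
        · rintro ⟨hz, hzk⟩
          exact ⟨by omega, hz⟩
      have hcardfilt : (G.filter (fun y => y < k)).card = d := by
        rw [← hfilt, ← hHerase, Finset.card_erase_of_mem hkH, hHcard]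
        omega
      -- G has exactly one element ≥ k, namely mx G
      have huniq : ∀ z ∈ G, z ≠ mx G → z < k := by
        intro z hz hzmx
        by_contra hzk
        push_neg at hzk
        have hzk' : k < z := lt_of_le_of_ne hzk (fun h => hkG (h ▸ hz))
        have hsub : insert (mx G) (insert z (G.filter (fun y => y < k))) ⊆ G := by
          intro w hw
          rcases Finset.mem_insert.1 hw with rfl | hw
          · exact mx_mem hGne
          · rcases Finset.mem_insert.1 hw with rfl | hw
            · exact hz
            · exact Finset.mem_of_mem_filter _ hw
        have h1 : z ∉ G.filter (fun y => y < k) := by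
          simp only [Finset.mem_filter]; push_neg; intro _; omega
        have h2 : mx G ∉ insert z (G.filter (fun y => y < k)) := by
          simp only [Finset.mem_insert, Finset.mem_filter]
          push_neg
          exact ⟨fun h => hzmx h.symm, fun _ => by omega⟩
        have := Finset.card_le_card hsub
        rw [Finset.card_insert_of_notMem h2, Finset.card_insert_of_notMem h1,
          hcardfilt, hGcard] at this
        omega
      have heq : H.erase k = G.erase (mx G) := by
        ext z
        simp only [Finset.mem_erase]
        constructor
        · rintro ⟨hzk, hz⟩
          have hzk' : z < k := by
            have := (le_mx hz).trans_eq heqk.symm; omega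
          exact ⟨by omega, (hb z hzk').1 hz⟩
        · rintro ⟨hzmx, hz⟩
          have hzk' : z < k := huniq z hz hzmx
          exact ⟨by omega, (hb z hzk').2 hz⟩
      rw [← heqk, heq]; exact hGL
    · have hkmxH' : k < mx H := lt_of_le_of_ne hkmxH hne
      have hgt : lexGT (H.erase (mx H)) (G.erase (mx G)) := by
        refine ⟨k, Finset.mem_erase.2 ⟨hne, hkH⟩, fun h => hkG (Finset.mem_of_mem_erase h), ?_⟩
        intro j hj
        rw [Finset.mem_erase, Finset.mem_erase]
        constructor
        · rintro ⟨-, hjH⟩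
          exact ⟨by omega, (hb j hj).1 hjH⟩
        · rintro ⟨-, hjG⟩
          exact ⟨by omega, (hb j hj).2 hjG⟩
      exact hL.2 _ hGL _ (erase_mem_M hH (mx_mem hHne)) hgt
  exact mem_shad.2 ⟨hH, H.erase (mx H), hHeL, Finset.erase_subset _ _⟩

/-! ### small degree and degenerate cases -/

lemma M_d_zero {n t : ℕ} : M n 0 t = {∅} := by
  ext F
  rw [mem_M]
  simp only [Finset.mem_singleton, Finset.card_eq_zero]
  constructor
  · rintro ⟨-, rfl, -⟩; rfl
  · rintro rfl
    exact ⟨Finset.empty_subset _, rfl, by simp⟩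

lemma M_n_zero {d t : ℕ} (hd : 1 ≤ d) : M 0 d t = ∅ := by
  ext F
  rw [mem_M]
  simp only [Finset.notMem_empty, iff_false]
  rintro ⟨hsub, hcard, -⟩
  have hF : F = ∅ := by
    rw [← Finset.subset_empty]
    simpa using hsub
  rw [hF] at hcard
  simp at hcard
  omega

lemma mLe_eq_card_of_ge {n d t i : ℕ} {A : Finset (Finset ℕ)}
    (hA : A ⊆ M n d t) (h : n ≤ i) : mLe i A = A.card := by
  unfold mLe
  rw [Finset.filter_true_of_mem]
  intro F hF j hj
  exact (le_n_of_mem_M (hA hF) hj).trans h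

/-! ### the degree 1 case -/

lemma mx_singleton (x : ℕ) : mx ({x} : Finset ℕ) = x :=
  mx_eq_of (Finset.mem_singleton_self x) (fun j hj => by rw [Finset.mem_singleton.1 hj])

lemma mLe_sss_one {n t : ℕ} {L : Finset (Finset ℕ)} (hL : IsSSS n 1 t L) (i : ℕ) :
    mLe i L = min L.card i := by
  set S := (Finset.Icc 1 n).filter (fun x => ({x} : Finset ℕ) ∈ L) with hS
  have hsingle : ∀ F ∈ L, F = {mx F} := by
    intro F hF
    obtain ⟨x, rfl⟩ := Finset.card_eq_one.1 (mem_M.1 (hL.1 hF)).2.1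
    rw [mx_singleton]
  have hmemS : ∀ F ∈ L, mx F ∈ S := by
    intro F hF
    have hFM := hL.1 hF
    have hne : F.Nonempty := nonempty_of_mem_M hFM le_rfl
    refine Finset.mem_filter.2 ⟨Finset.mem_Icc.2
      ⟨one_le_of_mem_M hFM (mx_mem hne), le_n_of_mem_M hFM (mx_mem hne)⟩, ?_⟩
    rw [← hsingle F hF]; exact hF
  have hcardLS : L.card = S.card := by
    apply Finset.card_nbij' (i := fun F => mx F) (j := fun x => ({x} : Finset ℕ))
    · exact hmemS
    · intro x hx; exact (Finset.mem_filter.1 hx).2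
    · intro F hF; exact (hsingle F hF).symm
    · intro x hx; exact mx_singleton x
  have hmleS : ∀ j, mLe j L = (S.filter (fun x => x ≤ j)).card := by
    intro j
    apply Finset.card_nbij' (i := fun F => mx F) (j := fun x => ({x} : Finset ℕ))
    · intro F hF
      obtain ⟨hFL, hFj⟩ := Finset.mem_filter.1 hF
      refine Finset.mem_filter.2 ⟨hmemS F hFL, ?_⟩
      have hne : F.Nonempty := nonempty_of_mem_M (hL.1 hFL) le_rfl
      exact hFj _ (mx_mem hne)
    · intro x hx
      obtain ⟨hxS, hxj⟩ := Finset.mem_filter.1 hx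
      refine Finset.mem_filter.2 ⟨(Finset.mem_filter.1 hxS).2, ?_⟩
      intro y hy
      rw [Finset.mem_singleton.1 hy]; exact hxj
    · intro F hF; exact (hsingle F (Finset.mem_filter.1 hF).1).symm
    · intro x hx; exact mx_singleton x
  have hdc : ∀ x ∈ S, ∀ y, 1 ≤ y → y < x → y ∈ S := by
    intro x hxS y hy1 hyx
    obtain ⟨hxI, hxL⟩ := Finset.mem_filter.1 hxS
    have hyM : ({y} : Finset ℕ) ∈ M n 1 t := by
      refine mem_M.2 ⟨?_, by simp, ?_⟩
      · intro z hz
        rw [Finset.mem_singleton.1 hz]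
        exact Finset.mem_Icc.2 ⟨hy1, by have := (Finset.mem_Icc.1 hxI).2; omega⟩
      · intro a ha b hb hab
        rw [Finset.mem_singleton.1 ha, Finset.mem_singleton.1 hb] at hab
        omega
    have hstep := hL.2 {x} hxL x (Finset.mem_singleton_self x) y hyx
      (by rw [Finset.mem_singleton]; omega)
      (by rwa [Finset.erase_singleton, LawfulSingleton.insert_empty_eq])
    rw [Finset.erase_singleton, LawfulSingleton.insert_empty_eq] at hstep
    exact Finset.mem_filter.2 ⟨Finset.mem_Icc.2
      ⟨hy1, by have := (Finset.mem_Icc.1 hxI).2; omega⟩, hstep⟩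
  have hmin : (S.filter (fun x => x ≤ i)).card = min S.card i := by
    by_cases hex : ∃ x ∈ S, i < x
    · obtain ⟨x, hxS, hxi⟩ := hex
      have hIcc : Finset.Icc 1 i ⊆ S := by
        intro y hy
        obtain ⟨h1, h2⟩ := Finset.mem_Icc.1 hy
        exact hdc x hxS y h1 (by omega)
      have hfeq : S.filter (fun x => x ≤ i) = Finset.Icc 1 i := by
        ext z
        simp only [Finset.mem_filter, Finset.mem_Icc]
        constructor
        · rintro ⟨hzS, hzi⟩
          exact ⟨(Finset.mem_Icc.1 (Finset.mem_filter.1 hzS).1).1, hzi⟩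
        · rintro ⟨h1, h2⟩
          exact ⟨hIcc (Finset.mem_Icc.2 ⟨h1, h2⟩), h2⟩
      have hSbig : i + 1 ≤ S.card := by
        have hsub : insert x (Finset.Icc 1 i) ⊆ S := by
          intro y hy
          rcases Finset.mem_insert.1 hy with rfl | hy
          · exact hxS
          · exact hIcc hy
        have := Finset.card_le_card hsub
        rw [Finset.card_insert_of_notMem (by simp only [Finset.mem_Icc]; omega),
          Nat.card_Icc] at this
        omega
      rw [hfeq, Nat.card_Icc]
      omega
    · push_neg at hex
      rw [Finset.filter_true_of_mem (fun x hx => hex x hx)]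
      have hsub2 : S ⊆ Finset.Icc 1 i := by
        intro x hx
        exact Finset.mem_Icc.2 ⟨(Finset.mem_Icc.1 (Finset.mem_filter.1 hx).1).1, hex x hx⟩
      have := Finset.card_le_card hsub2
      rw [Nat.card_Icc] at this
      omega
  rw [hmleS i, hmin, hcardLS]

/-! ### fiber machinery for the main induction -/

lemma mxG_facts {n e t : ℕ} (ht : 1 ≤ t) {G : Finset ℕ} (hG : G ∈ M (n-t) (e+1) t) :
    1 ≤ mx G ∧ mx G ≤ n - t ∧ mx G + t ≤ n ∧ n ∉ G := by
  have hne : G.Nonempty := nonempty_of_mem_M hG (by omega)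
  have h1 : 1 ≤ mx G := one_le_of_mem_M hG (mx_mem hne)
  have h2 : mx G ≤ n - t := le_n_of_mem_M hG (mx_mem hne)
  refine ⟨h1, h2, by omega, fun hn => ?_⟩
  have := le_n_of_mem_M hG hn
  have := one_le_of_mem_M hG hn
  omega

lemma er_mem_M {n e t : ℕ} {F : Finset ℕ} (hF : F ∈ M n (e+2) t) :
    F.erase (mx F) ∈ M (n-t) (e+1) t := by
  have hne : F.Nonempty := nonempty_of_mem_M hF (by omega)
  have hmx : mx F ∈ F := mx_mem hne
  obtain ⟨hsub, hcard, hsp⟩ := mem_M.1 hF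
  refine mem_M.2 ⟨?_, ?_, ?_⟩
  · intro j hj
    obtain ⟨hjne, hjF⟩ := Finset.mem_erase.1 hj
    have hjlt : j < mx F := lt_of_le_of_ne (le_mx hjF) hjne
    have := hsp j hjF (mx F) hmx hjlt
    have h1 : 1 ≤ j := (Finset.mem_Icc.1 (hsub hjF)).1
    have h2 : mx F ≤ n := (Finset.mem_Icc.1 (hsub hmx)).2
    exact Finset.mem_Icc.2 ⟨h1, by omega⟩
  · rw [Finset.card_erase_of_mem hmx, hcard]
    omega
  · intro i hi j hj hij
    exact hsp i (Finset.mem_of_mem_erase hi) j (Finset.mem_of_mem_erase hj) hij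

lemma insert_fiber {n e t : ℕ} (ht : 1 ≤ t) {G : Finset ℕ} (hG : G ∈ M (n-t) (e+1) t)
    {j : ℕ} (hj1 : mx G + t ≤ j) (hj2 : j ≤ n) :
    insert j G ∈ M n (e+2) t ∧ mx (insert j G) = j ∧ (insert j G).erase j = G := by
  obtain ⟨h1, h2, h3, -⟩ := mxG_facts ht hG
  have hjG : j ∉ G := fun h => by have := le_mx h; omega
  have hIns : insert j G ∈ M n (e+2) t := by
    have := insert_top_mem_M ht (M_mono (by omega) hG) (by omega) hj2
      (fun x hx => by have := le_mx hx; omega)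
    exact this
  exact ⟨hIns, mx_insert (fun x hx => by have := le_mx hx; omega), Finset.erase_insert hjG⟩

lemma fiber_card_le {n e t : ℕ} (ht : 1 ≤ t) {A : Finset (Finset ℕ)}
    (hA : A ⊆ M n (e+2) t) {G : Finset ℕ} (hG : G ∈ M (n-t) (e+1) t) :
    (A.filter (fun F => F.erase (mx F) = G)).card ≤ n + 1 - (mx G + t) := by
  obtain ⟨h1, h2, h3, -⟩ := mxG_facts ht hG
  have hmaps : ∀ F ∈ A.filter (fun F => F.erase (mx F) = G),
      mx F ∈ Finset.Icc (mx G + t) n := by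
    intro F hF
    obtain ⟨hFA, hFer⟩ := Finset.mem_filter.1 hF
    have hFM := hA hFA
    have hne : F.Nonempty := nonempty_of_mem_M hFM (by omega)
    have hmxG_F : mx G ∈ F := by
      have : mx G ∈ F.erase (mx F) := by
        rw [hFer]
        exact mx_mem (nonempty_of_mem_M hG (by omega))
      exact Finset.mem_of_mem_erase this
    have hmxne : mx G ≠ mx F := by
      have : mx G ∈ F.erase (mx F) := by
        rw [hFer]; exact mx_mem (nonempty_of_mem_M hG (by omega))
      exact (Finset.mem_erase.1 this).1
    have hlt : mx G < mx F := lt_of_le_of_ne (le_mx hmxG_F) hmxne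
    have hsp := (mem_M.1 hFM).2.2 (mx G) hmxG_F (mx F) (mx_mem hne) hlt
    exact Finset.mem_Icc.2 ⟨hsp, le_n_of_mem_M hFM (mx_mem hne)⟩
  have hinj : Set.InjOn mx (A.filter (fun F => F.erase (mx F) = G)) := by
    intro F1 h1' F2 h2' heq
    obtain ⟨-, her1⟩ := Finset.mem_filter.1 h1'
    obtain ⟨-, her2⟩ := Finset.mem_filter.1 h2'
    have hne1 : F1.Nonempty := nonempty_of_mem_M (hA (Finset.mem_filter.1 h1').1) (by omega)
    have hne2 : F2.Nonempty := nonempty_of_mem_M (hA (Finset.mem_filter.1 h2').1) (by omega)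
    calc F1 = insert (mx F1) (F1.erase (mx F1)) := (Finset.insert_erase (mx_mem hne1)).symm
      _ = insert (mx F2) (F2.erase (mx F2)) := by rw [her1, her2, heq]
      _ = F2 := Finset.insert_erase (mx_mem hne2)
  have := Finset.card_le_card_of_injOn mx hmaps hinj
  rw [Nat.card_Icc] at this
  exact this

lemma fiber_card_lt {n e t : ℕ} (ht : 1 ≤ t) {A : Finset (Finset ℕ)}
    (hA : A ⊆ M n (e+2) t) {G : Finset ℕ} (hG : G ∈ M (n-t) (e+1) t)
    (hnot : insert n G ∉ A) :
    (A.filter (fun F => F.erase (mx F) = G)).card + 1 ≤ n + 1 - (mx G + t) := by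
  obtain ⟨h1, h2, h3, -⟩ := mxG_facts ht hG
  have hmaps : ∀ F ∈ A.filter (fun F => F.erase (mx F) = G),
      mx F ∈ Finset.Icc (mx G + t) (n-1) := by
    intro F hF
    obtain ⟨hFA, hFer⟩ := Finset.mem_filter.1 hF
    have hFM := hA hFA
    have hne : F.Nonempty := nonempty_of_mem_M hFM (by omega)
    have hGne : G.Nonempty := nonempty_of_mem_M hG (by omega)
    have hmxG_F : mx G ∈ F := by
      have : mx G ∈ F.erase (mx F) := by rw [hFer]; exact mx_mem hGne
      exact Finset.mem_of_mem_erase this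
    have hmxne : mx G ≠ mx F := by
      have : mx G ∈ F.erase (mx F) := by rw [hFer]; exact mx_mem hGne
      exact (Finset.mem_erase.1 this).1
    have hlt : mx G < mx F := lt_of_le_of_ne (le_mx hmxG_F) hmxne
    have hsp := (mem_M.1 hFM).2.2 (mx G) hmxG_F (mx F) (mx_mem hne) hlt
    have hmxn : mx F ≠ n := by
      intro hmxn
      apply hnot
      have : F = insert n G := by
        rw [← hFer, ← hmxn]
        exact (Finset.insert_erase (mx_mem hne)).symm
      rwa [← this]
    have := le_n_of_mem_M hFM (mx_mem hne)
    exact Finset.mem_Icc.2 ⟨hsp, by omega⟩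
  have hinj : Set.InjOn mx (A.filter (fun F => F.erase (mx F) = G)) := by
    intro F1 h1' F2 h2' heq
    obtain ⟨-, her1⟩ := Finset.mem_filter.1 h1'
    obtain ⟨-, her2⟩ := Finset.mem_filter.1 h2'
    have hne1 : F1.Nonempty := nonempty_of_mem_M (hA (Finset.mem_filter.1 h1').1) (by omega)
    have hne2 : F2.Nonempty := nonempty_of_mem_M (hA (Finset.mem_filter.1 h2').1) (by omega)
    calc F1 = insert (mx F1) (F1.erase (mx F1)) := (Finset.insert_erase (mx_mem hne1)).symm
      _ = insert (mx F2) (F2.erase (mx F2)) := by rw [her1, her2, heq]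
      _ = F2 := Finset.insert_erase (mx_mem hne2)
  have := Finset.card_le_card_of_injOn mx hmaps hinj
  rw [Nat.card_Icc] at this
  omega

lemma full_fiber_card {n e t : ℕ} (ht : 1 ≤ t) {L : Finset (Finset ℕ)}
    (hL : IsSSS n (e+2) t L) {G : Finset ℕ} (hG : G ∈ M (n-t) (e+1) t)
    (hfull : insert n G ∈ L) :
    n + 1 - (mx G + t) ≤ (L.filter (fun F => F.erase (mx F) = G)).card := by
  obtain ⟨h1, h2, h3, hnG⟩ := mxG_facts ht hG
  have hsub : (Finset.Icc (mx G + t) n).image (fun j => insert j G) ⊆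
      L.filter (fun F => F.erase (mx F) = G) := by
    intro F hF
    obtain ⟨j, hj, rfl⟩ := Finset.mem_image.1 hF
    obtain ⟨hj1, hj2⟩ := Finset.mem_Icc.1 hj
    obtain ⟨hM', hmx', her'⟩ := insert_fiber ht hG hj1 hj2
    have hmem : insert j G ∈ L := by
      rcases eq_or_ne j n with rfl | hjn
      · exact hfull
      · have hjn' : j < n := by omega
        have hjnot : j ∉ insert n G := by
          simp only [Finset.mem_insert]
          push_neg
          exact ⟨hjn, fun h => by have := le_mx h; omega⟩
        have herin : (insert n G).erase n = G := Finset.erase_insert hnG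
        have := hL.2 (insert n G) hfull n (Finset.mem_insert_self _ _) j hjn' hjnot
          (by rw [herin]; exact hM')
        rwa [herin] at this
    refine Finset.mem_filter.2 ⟨hmem, ?_⟩
    rw [hmx', her']
  have hinj : Set.InjOn (fun j => insert j G) (Finset.Icc (mx G + t) n) := by
    intro j1 hj1 j2 hj2 heq
    simp only [Finset.coe_Icc, Set.mem_Icc] at hj1 hj2
    have hm1 : mx (insert j1 G) = j1 := mx_insert (fun x hx => by have := le_mx hx; omega)
    have hm2 : mx (insert j2 G) = j2 := mx_insert (fun x hx => by have := le_mx hx; omega)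
    rw [← hm1, ← hm2]
    simp only [heq]
  calc n + 1 - (mx G + t) = (Finset.Icc (mx G + t) n).card := (Nat.card_Icc _ _).symm
    _ = ((Finset.Icc (mx G + t) n).image (fun j => insert j G)).card :=
        (Finset.card_image_of_injOn hinj).symm
    _ ≤ _ := Finset.card_le_card hsub

lemma full_isSSS {n e t : ℕ} (ht : 1 ≤ t) {L : Finset (Finset ℕ)}
    (hL : IsSSS n (e+2) t L) :
    IsSSS (n-t) (e+1) t ((M (n-t) (e+1) t).filter (fun G => insert n G ∈ L)) := by
  refine ⟨Finset.filter_subset _ _, ?_⟩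
  intro G hGfil j hj i hij hiG hM'
  obtain ⟨hG, hins⟩ := Finset.mem_filter.1 hGfil
  obtain ⟨h1, h2, h3, hnG⟩ := mxG_facts ht hG
  obtain ⟨h1', h2', h3', hnG'⟩ := mxG_facts ht hM'
  have hjn : j < n := by
    have := le_n_of_mem_M hG hj
    have := one_le_of_mem_M hG hj
    omega
  have hin : i ≠ n := by omega
  have hstep := hL.2 (insert n G) hins j (Finset.mem_insert_of_mem hj) i hij
    (by
      simp only [Finset.mem_insert]
      push_neg
      exact ⟨hin, hiG⟩)
  have hrw : insert i ((insert n G).erase j) = insert n (insert i (G.erase j)) := by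
    rw [Finset.erase_insert_of_ne (by omega : n ≠ j), Finset.insert_comm]
  have hMfull : insert i ((insert n G).erase j) ∈ M n (e+2) t := by
    rw [hrw]
    have := insert_top_mem_M ht (M_mono (by omega : n - t ≤ n) hM') (by omega : 1 ≤ n)
      le_rfl (fun x hx => by
        have := le_n_of_mem_M hM' hx
        have := one_le_of_mem_M hM' hx
        omega)
    exact this
  have := hstep hMfull
  rw [hrw] at this
  exact Finset.mem_filter.2 ⟨hM', this⟩

lemma card_full_eq {n e t : ℕ} (ht : 1 ≤ t) {A : Finset (Finset ℕ)}
    (hA : A ⊆ M n (e+2) t) :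
    ((M (n-t) (e+1) t).filter (fun G => insert n G ∈ A)).card =
      (A.filter (fun F => n ∈ F)).card := by
  apply Finset.card_nbij' (i := fun G => insert n G) (j := fun F => F.erase n)
  · intro G hG
    obtain ⟨hGM, hins⟩ := Finset.mem_filter.1 hG
    exact Finset.mem_filter.2 ⟨hins, Finset.mem_insert_self _ _⟩
  · intro F hF
    obtain ⟨hFA, hnF⟩ := Finset.mem_filter.1 hF
    have hFM := hA hFA
    obtain ⟨hsub, hcard, hsp⟩ := mem_M.1 hFM
    have herM : F.erase n ∈ M (n-t) (e+1) t := by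
      refine mem_M.2 ⟨?_, ?_, ?_⟩
      · intro x hx
        obtain ⟨hxn, hxF⟩ := Finset.mem_erase.1 hx
        have hxlt : x < n := lt_of_le_of_ne ((Finset.mem_Icc.1 (hsub hxF)).2) hxn
        have := hsp x hxF n hnF hxlt
        exact Finset.mem_Icc.2 ⟨(Finset.mem_Icc.1 (hsub hxF)).1, by omega⟩
      · rw [Finset.card_erase_of_mem hnF, hcard]
        omega
      · intro a ha b hb hab
        exact hsp a (Finset.mem_of_mem_erase ha) b (Finset.mem_of_mem_erase hb) hab
    refine Finset.mem_filter.2 ⟨herM, ?_⟩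
    rw [Finset.insert_erase hnF]
    exact hFA
  · intro G hG
    obtain ⟨hGM, -⟩ := Finset.mem_filter.1 hG
    exact Finset.erase_insert (mxG_facts ht hGM).2.2.2
  · intro F hF
    exact Finset.insert_erase (Finset.mem_filter.1 hF).2

lemma mLe_last {n d t : ℕ} (hn : 1 ≤ n) {A : Finset (Finset ℕ)} (hA : A ⊆ M n d t) :
    mLe (n-1) A + (A.filter (fun F => n ∈ F)).card = A.card := by
  have hkey := Finset.card_filter_add_card_filter_not
    (s := A) (p := fun F => ∀ j ∈ F, j ≤ n - 1)
  have hcongr : A.filter (fun F => ¬ ∀ j ∈ F, j ≤ n - 1) = A.filter (fun F => n ∈ F) := by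
    apply Finset.filter_congr
    intro F hF
    constructor
    · intro hnot
      push_neg at hnot
      obtain ⟨j, hjF, hjgt⟩ := hnot
      have := le_n_of_mem_M (hA hF) hjF
      have : j = n := by omega
      rwa [← this]
    · intro hnF hall
      have := hall n hnF
      omega
  rw [hcongr] at hkey
  exact hkey

lemma capSum_eq {n e t : ℕ} (ht : 1 ≤ t) {A : Finset (Finset ℕ)}
    (hA : A ⊆ M (n-t) (e+1) t) :
    ∑ G ∈ A, (n + 1 - (mx G + t)) = ∑ j ∈ Finset.Icc 1 (n-t), mLe j A := by
  unfold mLe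
  simp only [Finset.card_filter]
  rw [Finset.sum_comm]
  apply Finset.sum_congr rfl
  intro G hG
  obtain ⟨h1, h2, h3, -⟩ := mxG_facts ht (hA hG)
  have hrw : ∀ j : ℕ, (∀ x ∈ G, x ≤ j) ↔ mx G ≤ j := by
    intro j
    constructor
    · intro h; exact Finset.sup_le h
    · intro h x hx; exact (le_mx hx).trans h
  calc n + 1 - (mx G + t) = (Finset.Icc (mx G) (n-t)).card := by rw [Nat.card_Icc]; omega
    _ = ∑ j ∈ Finset.Icc 1 (n-t), if mx G ≤ j then 1 else 0 := by
        rw [← Finset.card_filter]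
        congr 1
        ext j
        simp only [Finset.mem_filter, Finset.mem_Icc]
        omega
    _ = ∑ j ∈ Finset.Icc 1 (n-t), if ∀ x ∈ G, x ≤ j then 1 else 0 := by
        apply Finset.sum_congr rfl
        intro j hj
        simp only [hrw j]

lemma lex_cross {n e t : ℕ} (ht : 1 ≤ t) {L' : Finset (Finset ℕ)}
    (hL' : IsLexSet n (e+2) t L') {F : Finset ℕ} (hF : F ∈ L')
    {H : Finset ℕ} (hH : H ∈ M (n-t) (e+1) t)
    (hgt : lexGT H (F.erase (mx F))) : insert n H ∈ L' := by
  have hFM : F ∈ M n (e+2) t := hL'.1 hF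
  have hG : F.erase (mx F) ∈ M (n-t) (e+1) t := er_mem_M hFM
  obtain ⟨h1G, h2G, h3G, hnG⟩ := mxG_facts ht hG
  obtain ⟨h1H, h2H, h3H, hnH⟩ := mxG_facts ht hH
  have hFne : F.Nonempty := nonempty_of_mem_M hFM (by omega)
  have hmxF : mx F ∈ F := mx_mem hFne
  obtain ⟨k, hkH, hkG, hb⟩ := hgt
  have hcards : (F.erase (mx F)).card = H.card := by
    rw [(mem_M.1 hG).2.1, (mem_M.1 hH).2.1]
  obtain ⟨y, hyG, hky⟩ := exists_gt_of_lexGT hcards hkH hkG hb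
  have hkmxG : k < mx (F.erase (mx F)) := hky.trans_le (le_mx hyG)
  have hGsubF : F.erase (mx F) ⊆ F := Finset.erase_subset _ _
  have hmxGF : mx (F.erase (mx F)) ∈ F := hGsubF (mx_mem (nonempty_of_mem_M hG (by omega)))
  have hmxGne : mx (F.erase (mx F)) ≠ mx F :=
    (Finset.mem_erase.1 (mx_mem (nonempty_of_mem_M hG (by omega)))).1
  have hmxGlt : mx (F.erase (mx F)) < mx F := lt_of_le_of_ne (le_mx hmxGF) hmxGne
  have hkmxF : k < mx F := by omega
  have hmxFn : mx F ≤ n := le_n_of_mem_M hFM hmxF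
  have hInsM : insert n H ∈ M n (e+2) t := by
    have := insert_top_mem_M ht (M_mono (by omega : n - t ≤ n) hH) (by omega : 1 ≤ n)
      le_rfl (fun x hx => by
        have := le_n_of_mem_M hH hx
        have := one_le_of_mem_M hH hx
        omega)
    exact this
  have hgt2 : lexGT (insert n H) F := by
    refine ⟨k, Finset.mem_insert_of_mem hkH, ?_, ?_⟩
    · intro hkF
      have : k ∈ F.erase (mx F) := Finset.mem_erase.2 ⟨by omega, hkF⟩
      exact hkG this
    · intro j hj
      have hjn : j ≠ n := by omega
      have hjmxF : j ≠ mx F := by omega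
      rw [Finset.mem_insert]
      constructor
      · rintro (rfl | hjH)
        · omega
        · exact Finset.mem_of_mem_erase ((hb j hj).1 hjH)
      · intro hjF
        exact Or.inr ((hb j hj).2 (Finset.mem_erase.2 ⟨hjmxF, hjF⟩))
  exact hL'.2 F hF _ hInsM hgt2

lemma full_isLexSet {n e t : ℕ} (ht : 1 ≤ t) {L' : Finset (Finset ℕ)}
    (hL' : IsLexSet n (e+2) t L') :
    IsLexSet (n-t) (e+1) t ((M (n-t) (e+1) t).filter (fun G => insert n G ∈ L')) := by
  refine ⟨Finset.filter_subset _ _, ?_⟩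
  intro G hGfil H hH hgt
  obtain ⟨hG, hins⟩ := Finset.mem_filter.1 hGfil
  obtain ⟨h1, h2, h3, hnG⟩ := mxG_facts ht hG
  have hmx : mx (insert n G) = n := mx_insert (fun x hx => by have := le_mx hx; omega)
  have her : (insert n G).erase (mx (insert n G)) = G := by
    rw [hmx]; exact Finset.erase_insert hnG
  have hgt' : lexGT H ((insert n G).erase (mx (insert n G))) := by rw [her]; exact hgt
  exact Finset.mem_filter.2 ⟨hH, lex_cross ht hL' hins hH hgt'⟩

lemma fiber_rnk_le {n e t : ℕ} (ht : 1 ≤ t) {L' : Finset (Finset ℕ)}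
    (hL' : IsLexSet n (e+2) t L') {G : Finset ℕ} (hG : G ∈ M (n-t) (e+1) t)
    (hne : (L'.filter (fun F => F.erase (mx F) = G)).Nonempty) :
    rnk (n-t) (e+1) t G ≤ ((M (n-t) (e+1) t).filter (fun H => insert n H ∈ L')).card := by
  obtain ⟨F, hFfil⟩ := hne
  obtain ⟨hFL, hFer⟩ := Finset.mem_filter.1 hFfil
  apply Finset.card_le_card
  intro H hHfil
  obtain ⟨hHM, hHgt⟩ := Finset.mem_filter.1 hHfil
  have hgt : lexGT H (F.erase (mx F)) := by rw [hFer]; exact hHgt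
  exact Finset.mem_filter.2 ⟨hHM, lex_cross ht hL' hFL hHM hgt⟩

lemma capSum_lexSet_le {n e t : ℕ} (ht : 1 ≤ t) (a b : ℕ) (hab : a ≤ b)
    (hbN : b ≤ (M (n-t) (e+1) t).card) :
    (∑ G ∈ lexSet (n-t) (e+1) t a, (n + 1 - (mx G + t))) + (b - a) ≤
      ∑ G ∈ lexSet (n-t) (e+1) t b, (n + 1 - (mx G + t)) := by
  induction b, hab using Nat.le_induction with
  | base => simp
  | succ b hab ih =>
    have hbN' : b ≤ (M (n-t) (e+1) t).card := by omega
    have hih := ih hbN'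
    have hsub : lexSet (n-t) (e+1) t b ⊆ lexSet (n-t) (e+1) t (b+1) :=
      upset_subset_upset (lexSet_isLexSet _ _ _ _) (lexSet_isLexSet _ _ _ _)
        (by rw [card_lexSet, card_lexSet]; omega)
    have hdiff : ((lexSet (n-t) (e+1) t (b+1)) \ (lexSet (n-t) (e+1) t b)).card = 1 := by
      rw [Finset.card_sdiff_of_subset hsub, card_lexSet, card_lexSet]
      omega
    obtain ⟨G0, hG0⟩ := Finset.card_eq_one.1 hdiff
    have hG0mem : G0 ∈ lexSet (n-t) (e+1) t (b+1) := by
      have : G0 ∈ (lexSet (n-t) (e+1) t (b+1)) \ (lexSet (n-t) (e+1) t b) :=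
        hG0 ▸ Finset.mem_singleton_self G0
      exact (Finset.mem_sdiff.1 this).1
    have hG0M : G0 ∈ M (n-t) (e+1) t := lexSet_subset_M hG0mem
    have hcap : 1 ≤ n + 1 - (mx G0 + t) := by
      obtain ⟨h1, h2, h3, -⟩ := mxG_facts ht hG0M
      omega
    have hsum := Finset.sum_sdiff (f := fun G => n + 1 - (mx G + t)) hsub
    rw [hG0, Finset.sum_singleton] at hsum
    beta_reduce at hsum
    omega

/-! ### restriction lemmas -/

lemma restrict_isSSS {n d t : ℕ} {L : Finset (Finset ℕ)} (hL : IsSSS n d t L) :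
    IsSSS (n-1) d t (L.filter (fun F => F ∈ M (n-1) d t)) := by
  refine ⟨fun F hF => (Finset.mem_filter.1 hF).2, ?_⟩
  intro F hFfil j hj i hij hiF hM'
  obtain ⟨hFL, hFM⟩ := Finset.mem_filter.1 hFfil
  have := hL.2 F hFL j hj i hij hiF (M_mono (Nat.sub_le n 1) hM')
  exact Finset.mem_filter.2 ⟨this, hM'⟩

lemma restrict_isLexSet {n d t : ℕ} {L : Finset (Finset ℕ)} (hL : IsLexSet n d t L) :
    IsLexSet (n-1) d t (L.filter (fun F => F ∈ M (n-1) d t)) := by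
  refine ⟨fun F hF => (Finset.mem_filter.1 hF).2, ?_⟩
  intro v hvfil w hw hgt
  obtain ⟨hvL, hvM⟩ := Finset.mem_filter.1 hvfil
  exact Finset.mem_filter.2 ⟨hL.2 v hvL w (M_mono (Nat.sub_le n 1) hw) hgt, hw⟩

lemma mLe_restrict {n d t i : ℕ} {A : Finset (Finset ℕ)} (hA : A ⊆ M n d t)
    (hi : i ≤ n - 1) : mLe i (A.filter (fun F => F ∈ M (n-1) d t)) = mLe i A := by
  unfold mLe
  rw [Finset.filter_filter]
  congr 1
  apply Finset.filter_congr
  intro F hF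
  constructor
  · rintro ⟨-, h⟩; exact h
  · intro h
    exact ⟨M_of_le (hA hF) (fun j hj => (h j hj).trans hi), h⟩

lemma card_restrict {n d t : ℕ} {A : Finset (Finset ℕ)} (hA : A ⊆ M n d t) :
    (A.filter (fun F => F ∈ M (n-1) d t)).card = mLe (n-1) A := by
  unfold mLe
  congr 1
  apply Finset.filter_congr
  intro F hF
  constructor
  · intro h j hj
    exact le_n_of_mem_M h hj
  · intro h
    exact M_of_le (hA hF) h

/-! ### main comparison lemma -/

lemma lemA {t : ℕ} (ht : 1 ≤ t) :
    ∀ d n (L L' : Finset (Finset ℕ)), IsSSS n d t L → IsLexSet n d t L' →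
      L'.card ≤ L.card → ∀ i, mLe i L' ≤ mLe i L := by
  intro d
  induction d using Nat.strong_induction_on with
  | _ d ihd =>
  match d with
  | 0 =>
    intro n L L' hL hL' hc i
    have key : ∀ (A : Finset (Finset ℕ)), A ⊆ M n 0 t → mLe i A = A.card := by
      intro A hA
      unfold mLe
      rw [Finset.filter_true_of_mem]
      intro F hF j hj
      have := hA hF
      rw [M_d_zero, Finset.mem_singleton] at this
      rw [this] at hj
      exact absurd hj (Finset.notMem_empty j)
    rw [key L hL.1, key L' hL'.1]
    exact hc
  | 1 =>
    intro n L L' hL hL' hc i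
    rw [mLe_sss_one (isSSS_of_isLexSet hL') i, mLe_sss_one hL i]
    omega
  | (e+2) =>
    intro n
    induction n using Nat.strong_induction_on with
    | _ n ihn =>
    intro L L' hL hL' hc i
    rcases Nat.eq_zero_or_pos n with rfl | hn
    · have hL'e : L' = ∅ := by
        have := hL'.1
        rw [M_n_zero (by omega : 1 ≤ e + 2)] at this
        exact Finset.subset_empty.1 this
      rw [hL'e]
      simp [mLe]
    by_cases hi : n ≤ i
    · rw [mLe_eq_card_of_ge hL'.1 hi, mLe_eq_card_of_ge hL.1 hi]
      exact hc
    push_neg at hi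
    -- KEY STEP (Q): mLe (n-1) L' ≤ mLe (n-1) L
    have key : mLe (n-1) L' ≤ mLe (n-1) L := by
      have hm : mLe (n-1) L + (L.filter (fun F => n ∈ F)).card = L.card :=
        mLe_last hn hL.1
      have hm' : mLe (n-1) L' + (L'.filter (fun F => n ∈ F)).card = L'.card :=
        mLe_last hn hL'.1
      have hufL : ((M (n-t) (e+1) t).filter (fun G => insert n G ∈ L)).card =
          (L.filter (fun F => n ∈ F)).card := card_full_eq ht hL.1
      have hufL' : ((M (n-t) (e+1) t).filter (fun G => insert n G ∈ L')).card =
          (L'.filter (fun F => n ∈ F)).card := card_full_eq ht hL'.1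
      by_cases huu : ((M (n-t) (e+1) t).filter (fun G => insert n G ∈ L)).card ≤
          ((M (n-t) (e+1) t).filter (fun G => insert n G ∈ L')).card
      · omega
      push_neg at huu
      have hN : ((M (n-t) (e+1) t).filter (fun G => insert n G ∈ L)).card ≤
          (M (n-t) (e+1) t).card := Finset.card_le_card (Finset.filter_subset _ _)
      -- L.card is at least the capacity sum over the full fibers
      have hfib : L.card =
          ∑ G ∈ M (n-t) (e+1) t, (L.filter (fun F => F.erase (mx F) = G)).card :=
        Finset.card_eq_sum_card_fiberwise (fun F hF => er_mem_M (hL.1 hF))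
      have hfib' : L'.card =
          ∑ G ∈ M (n-t) (e+1) t, (L'.filter (fun F => F.erase (mx F) = G)).card :=
        Finset.card_eq_sum_card_fiberwise (fun F hF => er_mem_M (hL'.1 hF))
      have hm_ge : ∑ G ∈ (M (n-t) (e+1) t).filter (fun G => insert n G ∈ L),
          (n + 1 - (mx G + t)) ≤ L.card := by
        rw [hfib]
        calc ∑ G ∈ (M (n-t) (e+1) t).filter (fun G => insert n G ∈ L), (n + 1 - (mx G + t))
            ≤ ∑ G ∈ (M (n-t) (e+1) t).filter (fun G => insert n G ∈ L),
                (L.filter (fun F => F.erase (mx F) = G)).card := by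
              apply Finset.sum_le_sum
              intro G hG
              exact full_fiber_card ht hL (Finset.mem_filter.1 hG).1 (Finset.mem_filter.1 hG).2
          _ ≤ _ := by
              apply Finset.sum_le_sum_of_subset (Finset.filter_subset _ _)
      -- capacity sum comparison via the induction on the degree
      have hSSSfull : IsSSS (n-t) (e+1) t
          ((M (n-t) (e+1) t).filter (fun G => insert n G ∈ L)) := full_isSSS ht hL
      have hcard_lexu : (lexSet (n-t) (e+1) t
          ((M (n-t) (e+1) t).filter (fun G => insert n G ∈ L)).card).card =
          ((M (n-t) (e+1) t).filter (fun G => insert n G ∈ L)).card := by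
        rw [card_lexSet]; omega
      have hmle_all := ihd (e+1) (by omega) (n-t)
        ((M (n-t) (e+1) t).filter (fun G => insert n G ∈ L))
        (lexSet (n-t) (e+1) t ((M (n-t) (e+1) t).filter (fun G => insert n G ∈ L)).card)
        hSSSfull (lexSet_isLexSet _ _ _ _) (by omega)
      have hcap_comp : ∑ G ∈ lexSet (n-t) (e+1) t
            ((M (n-t) (e+1) t).filter (fun G => insert n G ∈ L)).card, (n + 1 - (mx G + t)) ≤
          ∑ G ∈ (M (n-t) (e+1) t).filter (fun G => insert n G ∈ L), (n + 1 - (mx G + t)) := by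
        rw [capSum_eq ht lexSet_subset_M, capSum_eq ht (Finset.filter_subset _ _)]
        exact Finset.sum_le_sum (fun j _ => hmle_all j)
      -- the chain inequality
      have hchain := capSum_lexSet_le ht
        (((M (n-t) (e+1) t).filter (fun G => insert n G ∈ L')).card + 1)
        (((M (n-t) (e+1) t).filter (fun G => insert n G ∈ L)).card)
        (by omega) hN
      -- identify the full fibers of L' with a lex segment
      have hfullL'eq : (M (n-t) (e+1) t).filter (fun G => insert n G ∈ L') =
          lexSet (n-t) (e+1) t
            ((M (n-t) (e+1) t).filter (fun G => insert n G ∈ L')).card :=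
        lexSet_eq_of_isLexSet (full_isLexSet ht hL')
      -- fibers of L' vanish outside lexSet (u'+1)
      have hvanish : ∀ G ∈ M (n-t) (e+1) t,
          G ∉ lexSet (n-t) (e+1) t
            (((M (n-t) (e+1) t).filter (fun G => insert n G ∈ L')).card + 1) →
          (L'.filter (fun F => F.erase (mx F) = G)).card = 0 := by
        intro G hG hnot
        rw [Finset.card_eq_zero]
        by_contra hne
        have hne' : (L'.filter (fun F => F.erase (mx F) = G)).Nonempty :=
          Finset.nonempty_iff_ne_empty.2 hne
        have := fiber_rnk_le ht hL' hG hne'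
        exact hnot (mem_lexSet.2 ⟨hG, by omega⟩)
      have hm'sum : L'.card = ∑ G ∈ lexSet (n-t) (e+1) t
          (((M (n-t) (e+1) t).filter (fun G => insert n G ∈ L')).card + 1),
          (L'.filter (fun F => F.erase (mx F) = G)).card := by
        rw [hfib']
        exact (Finset.sum_subset lexSet_subset_M hvanish).symm
      -- pick the distinguished element G0
      have hcard_u'1 : (lexSet (n-t) (e+1) t
          (((M (n-t) (e+1) t).filter (fun G => insert n G ∈ L')).card + 1)).card =
          ((M (n-t) (e+1) t).filter (fun G => insert n G ∈ L')).card + 1 := by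
        rw [card_lexSet]
        have := Finset.card_le_card
          (Finset.filter_subset (fun G => insert n G ∈ L') (M (n-t) (e+1) t))
        omega
      have hsubu : lexSet (n-t) (e+1) t
          ((M (n-t) (e+1) t).filter (fun G => insert n G ∈ L')).card ⊆
          lexSet (n-t) (e+1) t
            (((M (n-t) (e+1) t).filter (fun G => insert n G ∈ L')).card + 1) :=
        upset_subset_upset (lexSet_isLexSet _ _ _ _) (lexSet_isLexSet _ _ _ _)
          (by rw [card_lexSet, card_lexSet]; omega)
      have hdiff : ((lexSet (n-t) (e+1) t
          (((M (n-t) (e+1) t).filter (fun G => insert n G ∈ L')).card + 1)) \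
          (lexSet (n-t) (e+1) t
            ((M (n-t) (e+1) t).filter (fun G => insert n G ∈ L')).card)).card = 1 := by
        rw [Finset.card_sdiff_of_subset hsubu, hcard_u'1, card_lexSet]
        have := Finset.card_le_card
          (Finset.filter_subset (fun G => insert n G ∈ L') (M (n-t) (e+1) t))
        omega
      obtain ⟨G0, hG0⟩ := Finset.card_eq_one.1 hdiff
      have hG0mem' : G0 ∈ (lexSet (n-t) (e+1) t
          (((M (n-t) (e+1) t).filter (fun G => insert n G ∈ L')).card + 1)) \
          (lexSet (n-t) (e+1) t
            ((M (n-t) (e+1) t).filter (fun G => insert n G ∈ L')).card) :=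
        hG0 ▸ Finset.mem_singleton_self G0
      have hG0mem : G0 ∈ lexSet (n-t) (e+1) t
          (((M (n-t) (e+1) t).filter (fun G => insert n G ∈ L')).card + 1) :=
        (Finset.mem_sdiff.1 hG0mem').1
      have hG0M : G0 ∈ M (n-t) (e+1) t := lexSet_subset_M hG0mem
      have hG0notfull : insert n G0 ∉ L' := by
        intro hcontra
        have : G0 ∈ (M (n-t) (e+1) t).filter (fun G => insert n G ∈ L') :=
          Finset.mem_filter.2 ⟨hG0M, hcontra⟩
        rw [hfullL'eq] at this
        exact (Finset.mem_sdiff.1 hG0mem').2 this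
      have hG0lt := fiber_card_lt ht hL'.1 hG0M hG0notfull
      -- split the sums at G0
      have hsplit := Finset.add_sum_erase _
        (fun G => (L'.filter (fun F => F.erase (mx F) = G)).card) hG0mem
      have hsum_le : ∑ G ∈ (lexSet (n-t) (e+1) t
            (((M (n-t) (e+1) t).filter (fun G => insert n G ∈ L')).card + 1)).erase G0,
            (L'.filter (fun F => F.erase (mx F) = G)).card ≤
          ∑ G ∈ (lexSet (n-t) (e+1) t
            (((M (n-t) (e+1) t).filter (fun G => insert n G ∈ L')).card + 1)).erase G0,
            (n + 1 - (mx G + t)) := by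
        apply Finset.sum_le_sum
        intro G hG
        exact fiber_card_le ht hL'.1 (lexSet_subset_M (Finset.mem_of_mem_erase hG))
      have hcapsplit := Finset.add_sum_erase _
        (fun G => (n + 1 - (mx G + t))) hG0mem
      beta_reduce at hsplit hcapsplit
      omega
    -- now restrict to M (n-1) and use the induction on n
    have hcards : (L'.filter (fun F => F ∈ M (n-1) (e+2) t)).card ≤
        (L.filter (fun F => F ∈ M (n-1) (e+2) t)).card := by
      rw [card_restrict hL'.1, card_restrict hL.1]
      exact key
    have := ihn (n-1) (by omega) (L.filter (fun F => F ∈ M (n-1) (e+2) t))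
      (L'.filter (fun F => F ∈ M (n-1) (e+2) t))
      (restrict_isSSS hL) (restrict_isLexSet hL') hcards i
    rwa [mLe_restrict hL'.1 (by omega), mLe_restrict hL.1 (by omega)] at this

/-- existence and uniqueness of `I^{t-lex}`: for any `t`-spread strongly
stable collection `(L_d)` with `shad_t(L_d) ⊆ L_{d+1}`, there is a unique collection
`(L'_d)` of `t`-spread lex sets with `|L'_d| = |L_d|` and `shad_t(L'_d) ⊆ L'_{d+1}`. -/
theorem exists_tlex (n t : ℕ) (ht : 1 ≤ t) (L : ℕ → Finset (Finset ℕ))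
    (hss : ∀ d, 1 ≤ d → IsSSS n d t (L d))
    (hshad : ∀ d, 1 ≤ d → shad t n d (L d) ⊆ L (d + 1)) :
    ∃ L' : ℕ → Finset (Finset ℕ),
      (∀ d, 1 ≤ d → IsLexSet n d t (L' d) ∧ (L' d).card = (L d).card ∧
        shad t n d (L' d) ⊆ L' (d + 1)) ∧
      (∀ L'' : ℕ → Finset (Finset ℕ),
        (∀ d, 1 ≤ d → IsLexSet n d t (L'' d) ∧ (L'' d).card = (L d).card ∧
          shad t n d (L'' d) ⊆ L'' (d + 1)) →
        ∀ d, 1 ≤ d → L'' d = L' d) := by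
  refine ⟨fun d => lexSet n d t (L d).card, ?_, ?_⟩
  · intro d hd
    have hLM : L d ⊆ M n d t := (hss d hd).1
    have hcard : (lexSet n d t (L d).card).card = (L d).card := by
      rw [card_lexSet]
      have := Finset.card_le_card hLM
      omega
    refine ⟨lexSet_isLexSet n d t (L d).card, hcard, ?_⟩
    have hlex := lexSet_isLexSet n d t (L d).card
    have hlexshad : IsLexSet n (d+1) t (shad t n d (lexSet n d t (L d).card)) :=
      shad_isLexSet hd hlex
    have hcard2 : (lexSet n (d+1) t (L (d+1)).card).card = (L (d+1)).card := by
      rw [card_lexSet]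
      have := Finset.card_le_card (hss (d+1) (by omega)).1
      omega
    have hbound : (shad t n d (lexSet n d t (L d).card)).card ≤
        (lexSet n (d+1) t (L (d+1)).card).card := by
      rw [hcard2]
      calc (shad t n d (lexSet n d t (L d).card)).card
          = ∑ k ∈ Finset.Icc 1 n, mLe (k - t) (lexSet n d t (L d).card) :=
            card_shad ht hd (isSSS_of_isLexSet hlex)
        _ ≤ ∑ k ∈ Finset.Icc 1 n, mLe (k - t) (L d) := by
            apply Finset.sum_le_sum
            intro k _
            exact lemA ht d n (L d) (lexSet n d t (L d).card) (hss d hd) hlex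
              (by omega) (k - t)
        _ = (shad t n d (L d)).card := (card_shad ht hd (hss d hd)).symm
        _ ≤ (L (d+1)).card := Finset.card_le_card (hshad d hd)
    exact upset_subset_upset hlexshad (lexSet_isLexSet n (d+1) t (L (d+1)).card) hbound
  · intro L'' hL'' d hd
    obtain ⟨hlex'', hcard'', -⟩ := hL'' d hd
    calc L'' d = lexSet n d t (L'' d).card := lexSet_eq_of_isLexSet hlex''
      _ = lexSet n d t (L d).card := by rw [hcard'']
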